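/- Let q ∈ (-1,0) with ρ := |q| sufficiently small, and s ≥ 1 an integer. Then θ(q,·) has at least one real zero in each of the intervals (-ρ^{-4s-1}, -ρ^{-4s+1}), (-ρ^{-4s-3}, -ρ^{-4s-1}), (ρ^{-4s+2}, ρ^{-4s}), and (ρ^{-4s}, ρ^{-4s-2}). -/

import Mathlib

open Finset


/-- The real partial theta function θ(q,x) = ∑_{j=0}^∞ q^{j(j+1)/2} x^j. -/
noncomputable def thetaR (q x : ℝ) : ℝ := ∑' j : ℕ, q ^ (j * (j + 1) / 2) * x ^ j

lemma tri_succ (j : ℕ) : (j+1) * (j+2) / 2 = j * (j+1) / 2 + (j+1) := by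
  obtain ⟨c, hc⟩ := Nat.even_mul_succ_self j
  rw [show (j+1)*(j+2) = j*(j+1) + 2*(j+1) from by ring, hc]
  omega

lemma expo_head (j k : ℕ) :
    (j+k+2)*((j+k+2)+1)/2 + (j+k+2)*j + (k+1) ≤ j*(j+1)/2 + (j+k+2)*(j+k+2) := by
  obtain ⟨c, hc⟩ := Nat.even_mul_succ_self j
  obtain ⟨d, hd⟩ := Nat.even_mul_succ_self (j+k+2)
  have hcj : j*(j+1)/2 = c := by rw [hc]; omega
  have hdn : (j+k+2)*((j+k+2)+1)/2 = d := by rw [hd]; omega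
  rw [hcj, hdn]
  nlinarith [hc, hd]

lemma expo_tail (n k : ℕ) :
    n*(n+1)/2 + n*(n+k+1) + (k+1) ≤ (n+k+1)*((n+k+1)+1)/2 + n*n := by
  obtain ⟨c, hc⟩ := Nat.even_mul_succ_self (n+k+1)
  obtain ⟨d, hd⟩ := Nat.even_mul_succ_self n
  have hcj : (n+k+1)*((n+k+1)+1)/2 = c := by rw [hc]; omega
  have hdn : n*(n+1)/2 = d := by rw [hd]; omega
  rw [hcj, hdn]
  nlinarith [hc, hd]

lemma expo_eq (m : ℕ) :
    m*(m+1)/2 + (m+1)*(m+1) = (m+1)*((m+1)+1)/2 + (m+1)*m := by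
  rw [show (m+1)*((m+1)+1) = (m+1)*(m+2) from rfl, tri_succ]
  obtain ⟨c, hc⟩ := Nat.even_mul_succ_self m
  have hcj : m*(m+1)/2 = c := by rw [hc]; omega
  rw [hcj]
  nlinarith [hc]

lemma key (ρ : ℝ) (hρ0 : 0 < ρ) (hρ : ρ < 1/2) (m : ℕ) (ε σ : ℝ)
    (hε : ε = 1 ∨ ε = -1) (hσ : σ = 1 ∨ σ = -1)
    (hσ1 : σ * ((-1)^((m+1)*((m+1)+1)/2) * ε^(m+1)) = 1)
    (hσ2 : σ * ((-1)^(m*(m+1)/2) * ε^m) = 1) :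
    0 < σ * thetaR (-ρ) (ε * (ρ^(m+1))⁻¹) := by
  set n := m + 1 with hn
  set x : ℝ := ε * (ρ^n)⁻¹ with hx
  have hε1 : |ε| = 1 := by rcases hε with h | h <;> simp [h]
  have hσa : |σ| = 1 := by rcases hσ with h | h <;> simp [h]
  set f : ℕ → ℝ := fun j => (-ρ)^(j*(j+1)/2) * x^j with hf
  have hρn : (0:ℝ) < ρ^n := pow_pos hρ0 n
  have hρ1 : ρ < 1 := by linarith
  have habs : ∀ j, |f j| = ρ^(j*(j+1)/2) * ((ρ^n)^j)⁻¹ := by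
    intro j
    rw [hf]
    simp only
    rw [abs_mul, abs_pow, abs_pow, abs_neg, abs_of_pos hρ0, abs_mul, hε1, one_mul,
      abs_inv, abs_of_pos hρn, inv_pow]
  set M : ℝ := ρ^(n*(n+1)/2) * ((ρ^n)^n)⁻¹ with hM
  have hM0 : 0 < M := by positivity
  -- generic bound
  have hbound : ∀ j k : ℕ, n*(n+1)/2 + n*j + k ≤ j*(j+1)/2 + n*n → |f j| ≤ M * ρ^k := by
    intro j k hjk
    rw [habs j, hM]
    rw [← div_eq_mul_inv, ← div_eq_mul_inv, div_mul_eq_mul_div, div_le_div_iff₀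
      (by positivity) (by positivity), ← pow_mul, ← pow_mul, ← pow_add, ← pow_add, ← pow_add]
    exact pow_le_pow_of_le_one hρ0.le hρ1.le (by
      calc n*(n+1)/2 + k + n*j ≤ j*(j+1)/2 + n*n := by omega
        _ = _ := by ring_nf)
  -- dominant terms
  have hMeq : ρ^(m*(m+1)/2) * ((ρ^n)^m)⁻¹ = M := by
    rw [hM, ← div_eq_mul_inv, ← div_eq_mul_inv, div_eq_div_iff (by positivity) (by positivity),
      ← pow_mul, ← pow_mul, ← pow_add, ← pow_add]
    congr 1
    exact expo_eq m
  have hfn : σ * f n = M := by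
    have h1 : f n = (-1)^(n*(n+1)/2) * ε^n * (ρ^(n*(n+1)/2) * ((ρ^n)^n)⁻¹) := by
      rw [hf]; simp only
      rw [hx, neg_pow, mul_pow, inv_pow, ← inv_pow]
      ring
    rw [h1, hM]
    linear_combination (ρ^(n*(n+1)/2) * ((ρ^n)^n)⁻¹) * hσ1
  have hfm : σ * f m = M := by
    have h1 : f m = (-1)^(m*(m+1)/2) * ε^m * (ρ^(m*(m+1)/2) * ((ρ^n)^m)⁻¹) := by
      rw [hf]; simp only
      rw [hx, neg_pow, mul_pow, inv_pow, ← inv_pow]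
      ring
    rw [h1, ← hMeq]
    linear_combination (ρ^(m*(m+1)/2) * ((ρ^n)^m)⁻¹) * hσ2
  -- tail bounds
  have htailb : ∀ i : ℕ, |f (i + (n+1))| ≤ (M * ρ) * ρ^i := by
    intro i
    have h := hbound (i + (n+1)) (i+1) (by
      have := expo_tail n i
      have e1 : n + i + 1 = i + (n+1) := by omega
      rw [e1] at this
      omega)
    calc |f (i + (n+1))| ≤ M * ρ^(i+1) := h
      _ = (M * ρ) * ρ^i := by ring
  have hsum : Summable f := by
    apply (summable_nat_add_iff (n+1)).mp
    apply Summable.of_norm_bounded (g := fun i => (M*ρ) * ρ^i)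
      ((summable_geometric_of_lt_one hρ0.le hρ1).mul_left _)
    intro i
    rw [Real.norm_eq_abs]
    exact htailb i
  have htsum : |∑' i, f (i + (n+1))| ≤ M * (2*ρ) := by
    have hs2 : Summable (fun i => f (i + (n+1))) := (summable_nat_add_iff (n+1)).mpr hsum
    have h1 : |∑' i, f (i + (n+1))| ≤ ∑' i, |f (i + (n+1))| := by
      rw [← Real.norm_eq_abs]
      exact norm_tsum_le_tsum_norm (by
        simpa only [Real.norm_eq_abs] using hs2.abs)
    have h2 : ∑' i, |f (i + (n+1))| ≤ ∑' i, (M*ρ) * ρ^i := by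
      apply Summable.tsum_le_tsum htailb hs2.abs ((summable_geometric_of_lt_one hρ0.le hρ1).mul_left _)
    have h3 : ∑' i : ℕ, (M*ρ) * ρ^i = (M*ρ) * (1-ρ)⁻¹ := by
      rw [tsum_mul_left, tsum_geometric_of_lt_one hρ0.le hρ1]
    have h4 : (1-ρ)⁻¹ ≤ 2 := by
      rw [show (2:ℝ) = (1/2 : ℝ)⁻¹ by norm_num]
      exact inv_anti₀ (by norm_num) (by linarith)
    have h5 : (M*ρ) * (1-ρ)⁻¹ ≤ M * (2*ρ) := by
      calc (M*ρ) * (1-ρ)⁻¹ ≤ (M*ρ) * 2 := by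
            apply mul_le_mul_of_nonneg_left h4 (by positivity)
        _ = M * (2*ρ) := by ring
    linarith
  -- head bound
  have hheadb : ∀ j, j < m → |f j| ≤ M * ρ^(m-j) := by
    intro j hj
    have hk : m - j = (m-j-1)+1 := by omega
    rw [hk]
    apply hbound j (m-j-1+1)
    have h2 := expo_head j (m-j-1)
    have e1 : j + (m-j-1) + 2 = n := by omega
    rw [e1] at h2
    linarith
  have hhead : |∑ j ∈ range m, f j| ≤ M * (2*ρ) := by
    calc |∑ j ∈ range m, f j| ≤ ∑ j ∈ range m, |f j| := Finset.abs_sum_le_sum_abs _ _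
      _ ≤ ∑ j ∈ range m, M * ρ^(m-j) := Finset.sum_le_sum (fun j hj => hheadb j (mem_range.mp hj))
      _ = M * ∑ j ∈ range m, ρ^(m-j) := by rw [Finset.mul_sum]
      _ ≤ M * (2*ρ) := by
          apply mul_le_mul_of_nonneg_left _ hM0.le
          have hrefl : ∑ j ∈ range m, ρ^(m-j) = ∑ j ∈ range m, ρ^(j+1) := by
            rw [← Finset.sum_range_reflect (fun i => ρ^(i+1)) m]
            apply Finset.sum_congr rfl
            intro j hj
            have := mem_range.mp hj
            congr 1
            omega
          rw [hrefl]
          have : ∑ j ∈ range m, ρ^(j+1) = ρ * ∑ j ∈ range m, ρ^j := by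
            rw [Finset.mul_sum]
            apply Finset.sum_congr rfl
            intro j _
            ring
          rw [this]
          have hgs : ∑ j ∈ range m, ρ^j ≤ (1-ρ)⁻¹ := by
            calc ∑ j ∈ range m, ρ^j ≤ ∑' j : ℕ, ρ^j :=
                Summable.sum_le_tsum _ (fun i _ => by positivity)
                  (summable_geometric_of_lt_one hρ0.le hρ1)
              _ = (1-ρ)⁻¹ := tsum_geometric_of_lt_one hρ0.le hρ1
          have h4 : (1-ρ)⁻¹ ≤ 2 := by
            rw [show (2:ℝ) = (1/2 : ℝ)⁻¹ by norm_num]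
            exact inv_anti₀ (by norm_num) (by linarith)
          nlinarith
  -- assemble
  have hθ : thetaR (-ρ) x = (∑ j ∈ range m, f j + f m + f n) + ∑' i, f (i + (n+1)) := by
    have hsplit := Summable.sum_add_tsum_nat_add (n+1) hsum
    have hr : ∑ j ∈ range (n+1), f j = ∑ j ∈ range m, f j + f m + f n := by
      rw [show n + 1 = m + 1 + 1 from rfl, Finset.sum_range_succ, Finset.sum_range_succ]
    rw [thetaR, ← hsplit, hr]
  rw [hθ]
  have e1 : |σ * ∑ j ∈ range m, f j| ≤ M * (2*ρ) := by
    rw [abs_mul, hσa, one_mul]; exact hhead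
  have e2 : |σ * ∑' i, f (i + (n+1))| ≤ M * (2*ρ) := by
    rw [abs_mul, hσa, one_mul]; exact htsum
  have e1' := abs_le.mp e1
  have e2' := abs_le.mp e2
  have hfin : σ * ((∑ j ∈ range m, f j + f m + f n) + ∑' i, f (i + (n+1)))
      = σ * ∑ j ∈ range m, f j + M + M + σ * ∑' i, f (i + (n+1)) := by
    linear_combination hfm + hfn
  rw [hfin]
  nlinarith [mul_pos hM0 (show (0:ℝ) < 1 - 2*ρ by linarith)]

lemma thetaR_contOn (q : ℝ) (h0 : 0 < |q|) (h1 : |q| < 1) (a b : ℝ) :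
    ContinuousOn (thetaR q) (Set.Icc a b) := by
  set R : ℝ := max |a| |b| + 1 with hR
  have hR0 : (0:ℝ) < R := by positivity
  set u : ℕ → ℝ := fun j => |q| ^ (j*(j+1)/2) * R ^ j with hu
  have hupos : ∀ j, 0 < u j := fun j => by positivity
  have hus : Summable u := by
    apply summable_of_ratio_norm_eventually_le (r := 1/2) (by norm_num)
    have ht : Filter.Tendsto (fun j : ℕ => |q|^(j+1) * R) Filter.atTop (nhds 0) := by
      have h := (tendsto_pow_atTop_nhds_zero_of_lt_one (abs_nonneg q) h1).mul_const R
      rw [zero_mul] at h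
      exact h.comp (Filter.tendsto_add_atTop_nat 1)
    filter_upwards [ht.eventually_lt_const (by norm_num : (0:ℝ) < 1/2)] with j hj
    have he : u (j+1) = u j * (|q|^(j+1) * R) := by
      rw [hu]
      simp only
      rw [show (j+1)*(j+1+1) = (j+1)*(j+2) from rfl, tri_succ, pow_add, pow_succ]
      ring
    rw [Real.norm_eq_abs, Real.norm_eq_abs, abs_of_pos (hupos _), abs_of_pos (hupos _), he]
    nlinarith [hupos j, le_of_lt hj, (hupos j).le, mul_pos (pow_pos h0 (j+1)) hR0]
  have hfu : ∀ (j : ℕ), ∀ x ∈ Set.Icc a b, ‖q ^ (j*(j+1)/2) * x ^ j‖ ≤ u j := by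
    intro j x hx
    rw [Real.norm_eq_abs, abs_mul, abs_pow, abs_pow, hu]
    have hxR : |x| ≤ R := le_trans (abs_le_max_abs_abs hx.1 hx.2) (by linarith)
    exact mul_le_mul_of_nonneg_left (pow_le_pow_left₀ (abs_nonneg x) hxR j)
      (by positivity)
  have htu := tendstoUniformlyOn_tsum hus hfu (s := Set.Icc a b)
  have hc : ∀ t : Finset ℕ, ContinuousOn (fun x : ℝ => ∑ j ∈ t, q ^ (j*(j+1)/2) * x ^ j)
      (Set.Icc a b) := by
    intro t
    exact (continuous_finset_sum t fun j _ => (continuous_const.mul (continuous_pow j))).continuousOn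
  exact htu.continuousOn (Filter.Eventually.of_forall hc).frequently

lemma exists_zero (q a b : ℝ) (h0 : 0 < |q|) (h1 : |q| < 1) (hab : a < b)
    (hsgn : (thetaR q a < 0 ∧ 0 < thetaR q b) ∨ (0 < thetaR q a ∧ thetaR q b < 0)) :
    ∃ x ∈ Set.Ioo a b, thetaR q x = 0 := by
  have hc := thetaR_contOn q h0 h1 a b
  rcases hsgn with ⟨ha, hb⟩ | ⟨ha, hb⟩
  · obtain ⟨x, hx, hfx⟩ := intermediate_value_Ioo hab.le hc (Set.mem_Ioo.mpr ⟨ha, hb⟩)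
    exact ⟨x, hx, hfx⟩
  · obtain ⟨x, hx, hfx⟩ := intermediate_value_Ioo' hab.le hc (Set.mem_Ioo.mpr ⟨hb, ha⟩)
    exact ⟨x, hx, hfx⟩


lemma neg_one_pow_eq_one (k j : ℕ) (h : k = 2*j) : ((-1:ℝ))^k = 1 := by
  subst h; rw [pow_mul]; norm_num

lemma neg_one_pow_eq_neg_one (k j : ℕ) (h : k = 2*j+1) : ((-1:ℝ))^k = -1 := by
  subst h; rw [pow_succ, pow_mul]; norm_num

lemma tri_half_eq (a v : ℕ) (h : a*(a+1) = 2*v) : a*(a+1)/2 = v := by rw [h]; omega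

/-- For `ρ = |q|` sufficiently small, `θ(q,·)` has a real zero in each of the intervals
`(-ρ^{-4s-1}, -ρ^{-4s+1})`, `(-ρ^{-4s-3}, -ρ^{-4s-1})`, `(ρ^{-4s+2}, ρ^{-4s})` and
`(ρ^{-4s}, ρ^{-4s-2})`. -/
theorem thetaR_zeros_in_intervals (s : ℕ) (hs : 1 ≤ s) :
    ∃ ρ₀ > (0 : ℝ), ∀ q : ℝ, q ∈ Set.Ioo (-1 : ℝ) 0 → |q| < ρ₀ →
      (∃ x ∈ Set.Ioo (-(|q| ^ (4 * s + 1))⁻¹) (-(|q| ^ (4 * s - 1))⁻¹), thetaR q x = 0) ∧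
      (∃ x ∈ Set.Ioo (-(|q| ^ (4 * s + 3))⁻¹) (-(|q| ^ (4 * s + 1))⁻¹), thetaR q x = 0) ∧
      (∃ x ∈ Set.Ioo ((|q| ^ (4 * s - 2))⁻¹) ((|q| ^ (4 * s))⁻¹), thetaR q x = 0) ∧
      (∃ x ∈ Set.Ioo ((|q| ^ (4 * s))⁻¹) ((|q| ^ (4 * s + 2))⁻¹), thetaR q x = 0) := by
  refine ⟨1/2, by norm_num, ?_⟩
  intro q hq hq5
  obtain ⟨t, rfl⟩ : ∃ t, s = t + 1 := ⟨s - 1, by omega⟩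
  have hq0 : q < 0 := hq.2
  have hr0 : (0:ℝ) < |q| := abs_pos.mpr (ne_of_lt hq0)
  have hr2 : |q| < 1/2 := hq5
  have hr1 : |q| < 1 := by linarith
  have hq' : -|q| = q := by rw [abs_of_neg hq0]; ring
  -- six sign facts
  have S3 : thetaR q (-(|q|^(4*t+3))⁻¹) < 0 := by
    have h := key |q| hr0 hr2 (4*t+2) (-1) (-1) (Or.inr rfl) (Or.inr rfl)
      (by rw [neg_one_pow_eq_one _ (4*t^2+7*t+3) (tri_half_eq (4*t+2+1) (2*(4*t^2+7*t+3)) (by ring)),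
              neg_one_pow_eq_neg_one (4*t+2+1) (2*t+1) (by ring)]; norm_num)
      (by rw [neg_one_pow_eq_neg_one _ (4*t^2+5*t+1) (tri_half_eq (4*t+2) (2*(4*t^2+5*t+1)+1) (by ring)),
              neg_one_pow_eq_one (4*t+2) (2*t+1) (by ring)]; norm_num)
    rw [show 4*t+2+1 = 4*t+3 from by omega, hq'] at h
    have e : (-1 : ℝ) * (|q| ^ (4*t+3))⁻¹ = -(|q|^(4*t+3))⁻¹ := by ring
    rw [e] at h
    linarith
  have S5 : 0 < thetaR q (-(|q|^(4*t+5))⁻¹) := by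
    have h := key |q| hr0 hr2 (4*t+4) (-1) 1 (Or.inr rfl) (Or.inl rfl)
      (by rw [neg_one_pow_eq_neg_one _ (4*t^2+11*t+7) (tri_half_eq (4*t+4+1) (2*(4*t^2+11*t+7)+1) (by ring)),
              neg_one_pow_eq_neg_one (4*t+4+1) (2*t+2) (by ring)]; norm_num)
      (by rw [neg_one_pow_eq_one _ (4*t^2+9*t+5) (tri_half_eq (4*t+4) (2*(4*t^2+9*t+5)) (by ring)),
              neg_one_pow_eq_one (4*t+4) (2*t+2) (by ring)]; norm_num)
    rw [show 4*t+4+1 = 4*t+5 from by omega, hq'] at h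
    have e : (-1 : ℝ) * (|q| ^ (4*t+5))⁻¹ = -(|q|^(4*t+5))⁻¹ := by ring
    rw [e] at h
    linarith
  have S7 : thetaR q (-(|q|^(4*t+7))⁻¹) < 0 := by
    have h := key |q| hr0 hr2 (4*t+6) (-1) (-1) (Or.inr rfl) (Or.inr rfl)
      (by rw [neg_one_pow_eq_one _ (4*t^2+15*t+14) (tri_half_eq (4*t+6+1) (2*(4*t^2+15*t+14)) (by ring)),
              neg_one_pow_eq_neg_one (4*t+6+1) (2*t+3) (by ring)]; norm_num)
      (by rw [neg_one_pow_eq_neg_one _ (4*t^2+13*t+10) (tri_half_eq (4*t+6) (2*(4*t^2+13*t+10)+1) (by ring)),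
              neg_one_pow_eq_one (4*t+6) (2*t+3) (by ring)]; norm_num)
    rw [show 4*t+6+1 = 4*t+7 from by omega, hq'] at h
    have e : (-1 : ℝ) * (|q| ^ (4*t+7))⁻¹ = -(|q|^(4*t+7))⁻¹ := by ring
    rw [e] at h
    linarith
  have P2 : thetaR q ((|q|^(4*t+2))⁻¹) < 0 := by
    have h := key |q| hr0 hr2 (4*t+1) 1 (-1) (Or.inl rfl) (Or.inr rfl)
      (by rw [neg_one_pow_eq_neg_one _ (4*t^2+5*t+1) (tri_half_eq (4*t+1+1) (2*(4*t^2+5*t+1)+1) (by ring))]; norm_num)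
      (by rw [neg_one_pow_eq_neg_one _ (4*t^2+3*t) (tri_half_eq (4*t+1) (2*(4*t^2+3*t)+1) (by ring))]; norm_num)
    rw [show 4*t+1+1 = 4*t+2 from by omega, hq'] at h
    simp only [one_mul] at h
    linarith
  have P4 : 0 < thetaR q ((|q|^(4*t+4))⁻¹) := by
    have h := key |q| hr0 hr2 (4*t+3) 1 1 (Or.inl rfl) (Or.inl rfl)
      (by rw [neg_one_pow_eq_one _ (4*t^2+9*t+5) (tri_half_eq (4*t+3+1) (2*(4*t^2+9*t+5)) (by ring))]; norm_num)
      (by rw [neg_one_pow_eq_one _ (4*t^2+7*t+3) (tri_half_eq (4*t+3) (2*(4*t^2+7*t+3)) (by ring))]; norm_num)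
    rw [show 4*t+3+1 = 4*t+4 from by omega, hq'] at h
    simp only [one_mul] at h
    linarith
  have P6 : thetaR q ((|q|^(4*t+6))⁻¹) < 0 := by
    have h := key |q| hr0 hr2 (4*t+5) 1 (-1) (Or.inl rfl) (Or.inr rfl)
      (by rw [neg_one_pow_eq_neg_one _ (4*t^2+13*t+10) (tri_half_eq (4*t+5+1) (2*(4*t^2+13*t+10)+1) (by ring))]; norm_num)
      (by rw [neg_one_pow_eq_neg_one _ (4*t^2+11*t+7) (tri_half_eq (4*t+5) (2*(4*t^2+11*t+7)+1) (by ring))]; norm_num)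
    rw [show 4*t+5+1 = 4*t+6 from by omega, hq'] at h
    simp only [one_mul] at h
    linarith
  -- rewrite goal exponents
  rw [show 4*(t+1)+3 = 4*t+7 from by ring, show 4*(t+1)+2 = 4*t+6 from by ring,
    show 4*(t+1)+1 = 4*t+5 from by ring, show 4*(t+1)-1 = 4*t+3 from by omega,
    show 4*(t+1)-2 = 4*t+2 from by omega, show 4*(t+1) = 4*t+4 from by ring]
  have ppow : ∀ a b : ℕ, a < b → (|q|^a)⁻¹ < (|q|^b)⁻¹ := fun a b hab =>
    inv_strictAnti₀ (pow_pos hr0 b) (pow_lt_pow_right_of_lt_one₀ hr0 hr1 hab)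
  refine ⟨?_, ?_, ?_, ?_⟩
  · exact exists_zero q _ _ hr0 hr1 (neg_lt_neg (ppow _ _ (by omega))) (Or.inr ⟨S5, S3⟩)
  · exact exists_zero q _ _ hr0 hr1 (neg_lt_neg (ppow _ _ (by omega))) (Or.inl ⟨S7, S5⟩)
  · exact exists_zero q _ _ hr0 hr1 (ppow _ _ (by omega)) (Or.inl ⟨P2, P4⟩)
  · exact exists_zero q _ _ hr0 hr1 (ppow _ _ (by omega)) (Or.inr ⟨P4, P6⟩)
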